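/- For every δ ∈ (0,1) there exist a real c'' > 0 (one may take c'' = 4ρ·(max_{0≤k≤A} r_k + 1)) and L₀ ∈ ℕ such that for all L ≥ L₀ and every configuration η : Fin L → ℕ with ∑_i η_i = N_L, η_1 ≤ A and γ_N(η) > δ, one has c_L(η) ≤ c''. -/

import Mathlib

/-- Relative mass in the fast phase: `γ_N(η) = (1/N)·∑_i (η_i − A)₊`. -/
noncomputable def gammaN (N A : ℕ) {L : ℕ} (η : Fin L → ℕ) : ℝ :=
  (1 / (N : ℝ)) * ∑ i, max ((η i : ℝ) - (A : ℝ)) 0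

/-- Total jump rate of site 1:
`c(η) = u₁(η₁)·∑_{j≥2} u₂(η_j) + u₂(η₁)·∑_{j≥2} u₁(η_j)`. -/
noncomputable def cRate (u₁ u₂ : ℕ → ℝ) {L : ℕ} (hL : 0 < L) (η : Fin L → ℕ) : ℝ :=
  u₁ (η ⟨0, hL⟩) * (∑ j ∈ Finset.univ.erase (⟨0, hL⟩ : Fin L), u₂ (η j))
    + u₂ (η ⟨0, hL⟩) * (∑ j ∈ Finset.univ.erase (⟨0, hL⟩ : Fin L), u₁ (η j))

/-- under Assumption 1.2, for every `δ ∈ (0,1)` there are a constant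
`c'' > 0` and `L₀` such that for all `L ≥ L₀` and all configurations `η` with
`∑η = N_L`, `η₁ ≤ A` and `γ_N(η) > δ`, the total jump rate of site 1 satisfies
`c_L(η) ≤ c''`. -/
theorem cRate_upper_bound
    (A : ℕ) (ρ : ℝ) (hρ : 0 < ρ)
    (q r : ℕ → ℝ) (hq0 : q 0 = 0)
    (hqpos : ∀ k, 1 ≤ k → k ≤ A → 0 < q k)
    (hqr : ∀ k, 1 ≤ k → k ≤ A → q k ≤ r k) (hr0 : 0 < r 0)
    (N : ℕ → ℕ) (hN : Filter.Tendsto (fun L => (N L : ℝ) / (L : ℝ)) Filter.atTop (nhds ρ))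
    (C : ℝ) (hC : 0 ≤ C) (ζ : ℕ → ℝ) (hζ0 : ∀ L, 0 ≤ ζ L) (hζC : ∀ L, ζ L ≤ C / (L : ℝ))
    (u₁ u₂ : ℕ → ℕ → ℝ) (hu₁nn : ∀ L m, 0 ≤ u₁ L m) (hu₂nn : ∀ L m, 0 ≤ u₂ L m)
    (hu₁0 : ∀ L, u₁ L 0 = 0)
    (hu₁slow : ∀ L k, 1 ≤ k → k ≤ A → |u₁ L k * (L : ℝ) - q k| ≤ ζ L)
    (hu₂slow : ∀ L k, k ≤ A → |u₂ L k * (L : ℝ) - r k| ≤ ζ L)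
    (hu₁fast : ∀ L m, A < m → |u₁ L m - ((m : ℝ) - (A : ℝ))| ≤ ζ L)
    (hu₂fast : ∀ L m, A < m → |u₂ L m - ((m : ℝ) - (A : ℝ))| ≤ ζ L)
    (δ : ℝ) (hδ : δ ∈ Set.Ioo (0 : ℝ) 1) :
    ∃ c'' : ℝ, 0 < c'' ∧ ∃ L₀ : ℕ, ∀ L, L₀ ≤ L → ∀ (hL : 0 < L) (η : Fin L → ℕ),
      (∑ i, η i = N L) → η ⟨0, hL⟩ ≤ A → δ < gammaN (N L) A η →
      cRate (u₁ L) (u₂ L) hL η ≤ c'' := by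
  classical
  -- M : bound on r k (hence q k) for k ≤ A
  obtain ⟨M, hMr, hM0⟩ : ∃ M : ℝ, (∀ k, k ≤ A → r k ≤ M) ∧ 0 < M := by
    refine ⟨(Finset.range (A + 1)).sup' ⟨0, by simp⟩ r, ?_, ?_⟩
    · intro k hk
      exact Finset.le_sup' r (Finset.mem_range.mpr (by omega))
    · exact lt_of_lt_of_le hr0 (Finset.le_sup' r (Finset.mem_range.mpr (by omega)))
  have hMq : ∀ k, k ≤ A → q k ≤ M := by
    intro k hk
    rcases Nat.eq_zero_or_pos k with h | h
    · simp [h, hq0, hM0.le]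
    · exact (hqr k h hk).trans (hMr k hk)
  -- pick L₀
  obtain ⟨L₁, hL₁⟩ := (Metric.tendsto_atTop.mp hN) ρ hρ
  set K := M + C with hK
  have hKpos : 0 < K := by positivity
  refine ⟨4 * ρ * K + 1, by positivity, max L₁ (max 1 ⌈2 * K ^ 2⌉₊), ?_⟩
  intro L hLge hL η hsum hη₁ _
  have hL1 : (1 : ℕ) ≤ L := le_trans (le_trans (le_max_left _ _) (le_max_right _ _)) hLge
  have hLpos : (0 : ℝ) < L := by exact_mod_cast hL
  -- eventual bound N L / L < 2ρ
  have hNL : (N L : ℝ) < 2 * ρ * L := by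
    have := hL₁ L (le_trans (le_max_left _ _) hLge)
    rw [Real.dist_eq, abs_lt] at this
    have h2 : (N L : ℝ) / L < 2 * ρ := by linarith [this.2]
    calc (N L : ℝ) = (N L : ℝ) / L * L := by field_simp
    _ < 2 * ρ * L := by exact mul_lt_mul_of_pos_right h2 hLpos
  have hLK : 2 * K ^ 2 ≤ (L : ℝ) := by
    have : (⌈2 * K ^ 2⌉₊ : ℝ) ≤ L := by
      exact_mod_cast le_trans (le_trans (le_max_right _ _) (le_max_right _ _)) hLge
    exact le_trans (Nat.le_ceil _) this
  have hζ : ζ L ≤ C / L := hζC L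
  have hCL : C / L ≤ K / L := by
    gcongr
    linarith
  -- slow-phase bounds
  have hslow : ∀ ι ∈ ({u₁, u₂} : Set (ℕ → ℕ → ℝ)), ∀ k, k ≤ A → ι L k ≤ K / L := by
    intro ι hι k hk
    have hb : ι L k * L ≤ M + ζ L := by
      rcases hι with h | h
      · subst h
        rcases Nat.eq_zero_or_pos k with h0 | h0
        · simp only [h0, hu₁0 L, zero_mul]
          linarith [hζ0 L, hM0.le]
        · have := abs_le.mp (hu₁slow L k h0 hk)
          linarith [hMq k hk, this.2]
      · simp only [Set.mem_singleton_iff] at h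
        subst h
        have := abs_le.mp (hu₂slow L k hk)
        linarith [hMr k hk, this.2]
    have hb2 : ι L k * L ≤ K := by
      have hCL' : C / L ≤ C := by
        apply div_le_self hC
        exact_mod_cast hL1
      linarith [hζ]
    exact (le_div_iff₀ hLpos).mpr hb2
  -- per-site bound
  have hsite : ∀ ι ∈ ({u₁, u₂} : Set (ℕ → ℕ → ℝ)), ∀ m : ℕ,
      ι L m ≤ K / L + max ((m : ℝ) - A) 0 := by
    intro ι hι m
    rcases le_or_gt m A with hm | hm
    · have := hslow ι hι m hm
      have : ι L m ≤ K / L := this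
      nlinarith [le_max_right ((m : ℝ) - A) 0]
    · have hfast : |ι L m - ((m : ℝ) - A)| ≤ ζ L := by
        rcases hι with h | h
        · subst h; exact hu₁fast L m hm
        · simp only [Set.mem_singleton_iff] at h; subst h; exact hu₂fast L m hm
      have h1 := (abs_le.mp hfast).2
      have h2 : (0 : ℝ) ≤ (m : ℝ) - A := by
        have : (A : ℝ) < m := by exact_mod_cast hm
        linarith
      rw [max_eq_left h2]
      have := hζ.trans hCL
      linarith
  have hu₁slow' := hslow u₁ (by left; rfl)
  have hu₂slow' := hslow u₂ (by right; rfl)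
  have hu₁site := hsite u₁ (by left; rfl)
  have hu₂site := hsite u₂ (by right; rfl)
  -- sum bound
  have hsumb : ∀ ι ∈ ({u₁, u₂} : Set (ℕ → ℕ → ℝ)),
      (∑ j ∈ Finset.univ.erase (⟨0, hL⟩ : Fin L), ι L (η j)) ≤ K + N L := by
    intro ι hι
    have hnn : ∀ j : Fin L, 0 ≤ ι L (η j) := by
      intro j
      rcases hι with h | h
      · subst h; exact hu₁nn L _
      · simp only [Set.mem_singleton_iff] at h; subst h; exact hu₂nn L _
    calc (∑ j ∈ Finset.univ.erase (⟨0, hL⟩ : Fin L), ι L (η j))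
        ≤ ∑ j : Fin L, ι L (η j) :=
          Finset.sum_le_sum_of_subset_of_nonneg (Finset.erase_subset _ _)
            (fun j _ _ => hnn j)
      _ ≤ ∑ j : Fin L, (K / L + max ((η j : ℝ) - A) 0) :=
          Finset.sum_le_sum (fun j _ => hsite ι hι (η j))
      _ = K + ∑ j : Fin L, max ((η j : ℝ) - A) 0 := by
          rw [Finset.sum_add_distrib, Finset.sum_const, Finset.card_univ, Fintype.card_fin]
          rw [nsmul_eq_mul]
          field_simp
      _ ≤ K + ∑ j : Fin L, (η j : ℝ) := by
          gcongr with j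
          exact max_le (by linarith [Nat.cast_nonneg (A : ℕ) (α := ℝ)]) (Nat.cast_nonneg _)
      _ = K + N L := by
          rw [← Nat.cast_sum, hsum]
  -- assemble
  unfold cRate
  have hb1 : u₁ L (η ⟨0, hL⟩) ≤ K / L := hu₁slow' _ hη₁
  have hb2 : u₂ L (η ⟨0, hL⟩) ≤ K / L := hu₂slow' _ hη₁
  have hs2 : (∑ j ∈ Finset.univ.erase (⟨0, hL⟩ : Fin L), u₂ L (η j)) ≤ K + N L :=
    hsumb u₂ (by right; rfl)
  have hs1 : (∑ j ∈ Finset.univ.erase (⟨0, hL⟩ : Fin L), u₁ L (η j)) ≤ K + N L :=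
    hsumb u₁ (by left; rfl)
  have hs2nn : (0:ℝ) ≤ ∑ j ∈ Finset.univ.erase (⟨0, hL⟩ : Fin L), u₂ L (η j) :=
    Finset.sum_nonneg (fun j _ => hu₂nn L _)
  have hs1nn : (0:ℝ) ≤ ∑ j ∈ Finset.univ.erase (⟨0, hL⟩ : Fin L), u₁ L (η j) :=
    Finset.sum_nonneg (fun j _ => hu₁nn L _)
  have hKLnn : (0:ℝ) ≤ K / L := by positivity
  have key : u₁ L (η ⟨0, hL⟩) * (∑ j ∈ Finset.univ.erase (⟨0, hL⟩ : Fin L), u₂ L (η j))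
      + u₂ L (η ⟨0, hL⟩) * (∑ j ∈ Finset.univ.erase (⟨0, hL⟩ : Fin L), u₁ L (η j))
      ≤ 2 * (K / L * (K + N L)) := by
    have h1 : u₁ L (η ⟨0, hL⟩) * (∑ j ∈ Finset.univ.erase (⟨0, hL⟩ : Fin L), u₂ L (η j))
        ≤ K / L * (K + N L) :=
      mul_le_mul hb1 hs2 hs2nn hKLnn
    have h2 : u₂ L (η ⟨0, hL⟩) * (∑ j ∈ Finset.univ.erase (⟨0, hL⟩ : Fin L), u₁ L (η j))
        ≤ K / L * (K + N L) :=
      mul_le_mul hb2 hs1 hs1nn hKLnn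
    linarith
  refine key.trans ?_
  have final : 2 * (K / L * (K + N L)) ≤ 1 + 4 * ρ * K := by
    have expand : 2 * (K / L * (K + N L)) = 2 * K ^ 2 / L + 2 * K * (N L / L) := by
      field_simp
    rw [expand]
    have e1 : 2 * K ^ 2 / L ≤ 1 := by
      rw [div_le_one hLpos]; linarith
    have e2 : 2 * K * ((N L : ℝ) / L) ≤ 4 * ρ * K := by
      have : (N L : ℝ) / L ≤ 2 * ρ := by
        rw [div_le_iff₀ hLpos]; linarith
      nlinarith
    linarith
  linarith
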